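/- Let G be a stochastic game with rewards that is stopping under fairness, and let σ1 ∈ Σ1 be any strategy for Player 1. Then for every vertex v ∈ V, the infimum over all fair strategies σ2 of E^{σ1,σ2}_{G,v}[rew] is finite. -/

import Mathlib

open MeasureTheory
open scoped ENNReal Classical

/-- A turn-based two-player stochastic game on a finite vertex set `V`. -/
structure StochGame (V : Type*) [Fintype V] where
  /-- Player 1 vertices -/
  V1 : Finset V
  /-- Player 2 vertices -/
  V2 : Finset V
  /-- probabilistic vertices -/
  VP : Finset V
  cover : ∀ v : V, v ∈ V1 ∨ v ∈ V2 ∨ v ∈ VP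
  disj12 : ∀ v : V, ¬(v ∈ V1 ∧ v ∈ V2)
  disj1P : ∀ v : V, ¬(v ∈ V1 ∧ v ∈ VP)
  disj2P : ∀ v : V, ¬(v ∈ V2 ∧ v ∈ VP)
  /-- the probabilistic transition function -/
  δ : V → V → ℝ
  δ_nonneg : ∀ v v', 0 ≤ δ v v'
  δ_le_one : ∀ v v', δ v v' ≤ 1
  det : ∀ v : V, (v ∈ V1 ∨ v ∈ V2) → ∀ v', δ v v' = 0 ∨ δ v v' = 1
  prob : ∀ v ∈ VP, ∑ v' : V, δ v v' = 1
  post_nonempty : ∀ v : V, ∃ v', 0 < δ v v'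

namespace StochGame

variable {V : Type*} [Fintype V]

/-- successors of a vertex -/
def post (G : StochGame V) (v : V) : Set V := {v' | 0 < G.δ v v'}

/-- a vertex is terminal if `δ(v,v) = 1` and `δ(v,v') = 0` for `v' ≠ v`. -/
def Terminal (G : StochGame V) (v : V) : Prop :=
  G.δ v v = 1 ∧ ∀ v', v' ≠ v → G.δ v v' = 0

/-- A strategy for the player owning the vertices in `P`: a function assigning to each
finite history and current vertex a probability distribution over vertices, supported
on successors when the current vertex belongs to `P`. -/
structure Strategy (G : StochGame V) (P : Finset V) where
  f : List V → V → V → ℝ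
  nonneg : ∀ h v v', 0 ≤ f h v v'
  sum_one : ∀ h v, ∑ v' : V, f h v v' = 1
  support : ∀ h v, v ∈ P → ∀ v', 0 < f h v v' → 0 < G.δ v v'

variable {G : StochGame V} {P : Finset V}

/-- a memoryless strategy only depends on the current vertex -/
def Strategy.Memoryless (σ : Strategy G P) : Prop :=
  ∀ h h' cur, σ.f h cur = σ.f h' cur

/-- a deterministic (pure) strategy takes Dirac distributions as values -/
def Strategy.Deterministic (σ : Strategy G P) : Prop :=
  ∀ h cur, ∃ v', ∀ u, σ.f h cur u = if u = v' then 1 else 0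

/-- a semi-Markov strategy depends only on the initial vertex, the number of elapsed
steps and the current vertex -/
def Strategy.SemiMarkov (σ : Strategy G P) : Prop :=
  ∀ (v0 : V) (h h' : List V) (cur : V), h.length = h'.length →
    σ.f (v0 :: h) cur = σ.f (v0 :: h') cur

variable [DecidableEq V]

/-- one-step transition probability given strategies of both players -/
noncomputable def step (G : StochGame V) (σ1 : Strategy G G.V1) (σ2 : Strategy G G.V2)
    (h : List V) (v v' : V) : ℝ :=
  if v ∈ G.V1 then σ1.f h v v' else if v ∈ G.V2 then σ2.f h v v' else G.δ v v'

/-- the history consisting of the first `i` vertices of `w` -/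
def hist (w : ℕ → V) (i : ℕ) : List V := (List.range i).map w

/-- probability that the play starts with the vertices `w 0, w 1, …, w n` when
the game starts at `v` and the players use strategies `σ1`, `σ2`. -/
noncomputable def prefixProb (G : StochGame V) (σ1 : Strategy G G.V1) (σ2 : Strategy G G.V2)
    (v : V) (n : ℕ) (w : ℕ → V) : ℝ :=
  (if w 0 = v then 1 else 0) *
    ∏ i ∈ Finset.range n, G.step σ1 σ2 (hist w i) (w i) (w (i + 1))

/-- the cylinder of all infinite plays agreeing with `w` on the first `n+1` coordinates -/
def cyl (n : ℕ) (w : ℕ → V) : Set (ℕ → V) := {ω | ∀ i ≤ n, ω i = w i}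

variable [MeasurableSpace V]

/-- `μ` is the path measure of the game `G` starting at `v` under strategies `σ1, σ2`:
it is the (unique) probability measure on `V^ω` (with the product σ-algebra) whose
cylinder probabilities are given by the products of the transition probabilities. -/
def IsPathMeasure (G : StochGame V) (σ1 : Strategy G G.V1) (σ2 : Strategy G G.V2)
    (v : V) (μ : Measure (ℕ → V)) : Prop :=
  IsProbabilityMeasure μ ∧
    ∀ (n : ℕ) (w : ℕ → V), μ (cyl n w) = ENNReal.ofReal (G.prefixProb σ1 σ2 v n w)

/-- the set of vertices occurring infinitely often in a play -/
def infOcc (ω : ℕ → V) : Set V := {u | ∀ N, ∃ n, N ≤ n ∧ ω n = u}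

/-- the set of plays that are fair for Player 2 -/
def FP2 (G : StochGame V) : Set (ℕ → V) :=
  {ω | ∀ u ∈ G.V2, u ∈ infOcc ω → ∀ u' ∈ G.post u, u' ∈ infOcc ω}

/-- the event `◇T` that a terminal vertex is reached -/
def ReachT (G : StochGame V) : Set (ℕ → V) := {ω | ∃ i, G.Terminal (ω i)}

/-- A Player 2 strategy is (almost surely) fair if the fair plays have probability 1
under any Player 1 strategy and any initial vertex. -/
def Fair (G : StochGame V) (σ2 : Strategy G G.V2) : Prop :=
  ∀ (σ1 : Strategy G G.V1) (v : V) (μ : Measure (ℕ → V)),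
    G.IsPathMeasure σ1 σ2 v μ → μ G.FP2 = 1

/-- `G` is stopping under fairness: a terminal vertex is reached almost surely
whenever Player 2 plays a fair strategy. -/
def StoppingUnderFairness (G : StochGame V) : Prop :=
  ∀ (σ1 : Strategy G G.V1) (σ2 : Strategy G G.V2), G.Fair σ2 →
    ∀ (v : V) (μ : Measure (ℕ → V)), G.IsPathMeasure σ1 σ2 v μ → μ G.ReachT = 1

/-- the total accumulated reward of a play -/
noncomputable def rew (r : V → ℝ) (ω : ℕ → V) : ℝ≥0∞ := ∑' i, ENNReal.ofReal (r (ω i))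

/-- the expected total reward -/
noncomputable def expRew (μ : Measure (ℕ → V)) (r : V → ℝ) : ℝ≥0∞ := ∫⁻ ω, rew r ω ∂μ

end StochGame

namespace StochGame

set_option linter.unusedSectionVars false

variable {V : Type*} [Fintype V] [DecidableEq V]

/-! ### Basic successor machinery -/

noncomputable def postF (G : StochGame V) (u : V) : Finset V :=
  Finset.univ.filter (fun v' => 0 < G.δ u v')

lemma mem_postF {G : StochGame V} {u v' : V} : v' ∈ G.postF u ↔ 0 < G.δ u v' := by
  simp [postF]

lemma postF_nonempty (G : StochGame V) (u : V) : (G.postF u).Nonempty := by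
  obtain ⟨v', hv'⟩ := G.post_nonempty u
  exact ⟨v', mem_postF.2 hv'⟩

noncomputable def succList (G : StochGame V) (u : V) : List V := (G.postF u).toList

lemma succList_length_pos (G : StochGame V) (u : V) : 0 < (G.succList u).length := by
  rw [succList, Finset.length_toList]
  exact Finset.card_pos.2 (G.postF_nonempty u)

lemma mem_succList {G : StochGame V} {u v' : V} : v' ∈ G.succList u ↔ 0 < G.δ u v' := by
  rw [succList, Finset.mem_toList, mem_postF]

noncomputable def pick (G : StochGame V) (u : V) (k : ℕ) : V :=
  (G.succList u).get ⟨k % (G.succList u).length,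
    Nat.mod_lt _ (G.succList_length_pos u)⟩

lemma pick_pos (G : StochGame V) (u : V) (k : ℕ) : 0 < G.δ u (G.pick u k) := by
  rw [← mem_succList]
  exact List.get_mem _ _

lemma pick_congr (G : StochGame V) (u : V) {k k' : ℕ}
    (h : k % (G.succList u).length = k' % (G.succList u).length) :
    G.pick u k = G.pick u k' := by
  unfold pick; congr 1; exact Fin.ext h

lemma exists_pick_target {G : StochGame V} {u u' : V} (h : 0 < G.δ u u') :
    ∃ r < (G.succList u).length, ∀ k, k % (G.succList u).length = r → G.pick u k = u' := by
  obtain ⟨i, hi⟩ := List.get_of_mem (mem_succList.2 h)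
  refine ⟨i.1, i.2, fun k hk => ?_⟩
  rw [pick]
  have : (⟨k % (G.succList u).length, Nat.mod_lt _ (G.succList_length_pos u)⟩ : Fin _) = i :=
    Fin.ext (by simpa using hk)
  rw [this, hi]

/-! ### Strategy shift and the round-robin strategy -/

variable {G : StochGame V}

def Strategy.shift {P : Finset V} (σ : Strategy G P) (v : V) : Strategy G P where
  f h := σ.f (v :: h)
  nonneg h := σ.nonneg (v :: h)
  sum_one h := σ.sum_one (v :: h)
  support h := σ.support (v :: h)

@[simp] lemma Strategy.shift_f {P : Finset V} (σ : Strategy G P) (v : V) (h : List V)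
    (u u' : V) : (σ.shift v).f h u u' = σ.f (v :: h) u u' := rfl

/-- the round-robin Player 2 strategy with counter offsets `c₀` -/
noncomputable def rr (G : StochGame V) (c₀ : V → ℕ) : Strategy G G.V2 where
  f h u u' := if u' = G.pick u (c₀ u + h.count u) then 1 else 0
  nonneg h u u' := by
    by_cases h' : u' = G.pick u (c₀ u + h.count u) <;> simp [h']
  sum_one h u := by simp
  support h u _ u' hpos := by
    have : u' = G.pick u (c₀ u + h.count u) := by by_contra hne; simp [hne] at hpos
    rw [this]; exact G.pick_pos _ _

/-- increment the counter of vertex `v` -/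
def bump (v : V) (c₀ : V → ℕ) : V → ℕ := fun u => if u = v then c₀ u + 1 else c₀ u

lemma rr_shift_f (c₀ : V → ℕ) (v : V) (h : List V) (u u' : V) :
    ((G.rr c₀).shift v).f h u u' = (G.rr (bump v c₀)).f h u u' := by
  have harg : c₀ u + (v :: h).count u = bump v c₀ u + h.count u := by
    by_cases huv : u = v
    · subst huv; simp [List.count_cons, bump]; omega
    · simp [List.count_cons, bump, huv, Ne.symm huv]
  show (if u' = G.pick u (c₀ u + (v :: h).count u) then (1:ℝ) else 0)
      = if u' = G.pick u (bump v c₀ u + h.count u) then 1 else 0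
  rw [harg]

end StochGame
namespace StochGame

set_option linter.unusedSectionVars false

variable {V : Type*} [Fintype V] [DecidableEq V] {G : StochGame V}

lemma step_nonneg (σ1 : Strategy G G.V1) (σ2 : Strategy G G.V2) (h : List V) (v v' : V) :
    0 ≤ G.step σ1 σ2 h v v' := by
  unfold step
  split
  · exact σ1.nonneg h v v'
  split
  · exact σ2.nonneg h v v'
  · exact G.δ_nonneg v v'

lemma step_sum_one (σ1 : Strategy G G.V1) (σ2 : Strategy G G.V2) (h : List V) (v : V) :
    ∑ v' : V, G.step σ1 σ2 h v v' = 1 := by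
  unfold step
  by_cases h1 : v ∈ G.V1
  · simpa [h1] using σ1.sum_one h v
  by_cases h2 : v ∈ G.V2
  · simpa [h1, h2] using σ2.sum_one h v
  · have hP : v ∈ G.VP := by rcases G.cover v with h | h | h <;> tauto
    simpa [h1, h2] using G.prob v hP

lemma step_shift (σ1 : Strategy G G.V1) (σ2 : Strategy G G.V2) (v : V) (h : List V)
    (u u' : V) : G.step σ1 σ2 (v :: h) u u' = G.step (σ1.shift v) (σ2.shift v) h u u' := rfl

/-- if `t` is terminal, any positive step from `t` stays in `t` -/
lemma step_terminal (σ1 : Strategy G G.V1) (σ2 : Strategy G G.V2) (h : List V) {t u' : V}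
    (ht : G.Terminal t) (hpos : 0 < G.step σ1 σ2 h t u') : u' = t := by
  by_contra hne
  unfold step at hpos
  split at hpos
  case isTrue h1 =>
    have := σ1.support h t h1 u' hpos
    rw [ht.2 u' hne] at this; exact lt_irrefl _ this
  split at hpos
  case isTrue h2 =>
    have := σ2.support h t h2 u' hpos
    rw [ht.2 u' hne] at this; exact lt_irrefl _ this
  case isFalse =>
    rw [ht.2 u' hne] at hpos; exact lt_irrefl _ hpos

/-- the maximal probability (over histories/strategies) of avoiding terminals for `n` steps -/
noncomputable def AS (G : StochGame V) :
    ℕ → Strategy G G.V1 → Strategy G G.V2 → V → ℝ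
  | 0, _, _, v => if G.Terminal v then 0 else 1
  | (n+1), σ1, σ2, v => if G.Terminal v then 0 else
      ∑ v' : V, G.step σ1 σ2 [] v v' * G.AS n (σ1.shift v) (σ2.shift v) v'

lemma AS_nonneg (n : ℕ) (σ1 : Strategy G G.V1) (σ2 : Strategy G G.V2) (v : V) :
    0 ≤ G.AS n σ1 σ2 v := by
  induction n generalizing σ1 σ2 v with
  | zero => rw [AS]; split <;> norm_num
  | succ n ih =>
    rw [AS]; split
    · exact le_rfl
    · exact Finset.sum_nonneg fun v' _ => mul_nonneg (step_nonneg _ _ _ _ _) (ih _ _ _)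

lemma AS_terminal (n : ℕ) (σ1 : Strategy G G.V1) (σ2 : Strategy G G.V2) {v : V}
    (hv : G.Terminal v) : G.AS n σ1 σ2 v = 0 := by
  cases n <;> rw [AS] <;> simp [hv]

lemma AS_le_one (n : ℕ) (σ1 : Strategy G G.V1) (σ2 : Strategy G G.V2) (v : V) :
    G.AS n σ1 σ2 v ≤ 1 := by
  induction n generalizing σ1 σ2 v with
  | zero => rw [AS]; split <;> norm_num
  | succ n ih =>
    rw [AS]; split
    · norm_num
    · calc ∑ v' : V, G.step σ1 σ2 [] v v' * G.AS n (σ1.shift v) (σ2.shift v) v'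
          ≤ ∑ v' : V, G.step σ1 σ2 [] v v' * 1 :=
            Finset.sum_le_sum fun v' _ => mul_le_mul_of_nonneg_left (ih _ _ _)
              (step_nonneg _ _ _ _ _)
      _ = 1 := by simpa using step_sum_one σ1 σ2 [] v

lemma AS_congr (n : ℕ) {σ1 σ1' : Strategy G G.V1} {σ2 σ2' : Strategy G G.V2}
    (h1 : ∀ h u u', σ1.f h u u' = σ1'.f h u u') (h2 : ∀ h u u', σ2.f h u u' = σ2'.f h u u')
    (v : V) : G.AS n σ1 σ2 v = G.AS n σ1' σ2' v := by
  induction n generalizing σ1 σ1' σ2 σ2' v with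
  | zero => rw [AS, AS]
  | succ n ih =>
    rw [AS, AS]
    split
    · rfl
    · refine Finset.sum_congr rfl fun v' _ => ?_
      rw [ih (σ1 := σ1.shift v) (σ1' := σ1'.shift v) (σ2 := σ2.shift v) (σ2' := σ2'.shift v)
        (fun h u u' => h1 _ _ _) (fun h u u' => h2 _ _ _) v']
      congr 1
      unfold step; split
      · exact h1 _ _ _
      split
      · exact h2 _ _ _
      · rfl

lemma AS_succ_le (n : ℕ) (σ1 : Strategy G G.V1) (σ2 : Strategy G G.V2) (v : V) :
    G.AS (n+1) σ1 σ2 v ≤ G.AS n σ1 σ2 v := by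
  induction n generalizing σ1 σ2 v with
  | zero =>
    rw [AS, AS]; split
    · exact le_rfl
    · calc ∑ v' : V, G.step σ1 σ2 [] v v' * G.AS 0 (σ1.shift v) (σ2.shift v) v'
          ≤ ∑ v' : V, G.step σ1 σ2 [] v v' * 1 :=
            Finset.sum_le_sum fun v' _ => mul_le_mul_of_nonneg_left (AS_le_one _ _ _ _)
              (step_nonneg _ _ _ _ _)
      _ = 1 := by simpa using step_sum_one σ1 σ2 [] v
  | succ n ih =>
    rw [AS]
    conv_rhs => rw [AS]
    split
    · exact le_rfl
    · exact Finset.sum_le_sum fun v' _ =>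
        mul_le_mul_of_nonneg_left (ih _ _ _) (step_nonneg _ _ _ _ _)

lemma AS_antitone {n m : ℕ} (hnm : n ≤ m) (σ1 : Strategy G G.V1) (σ2 : Strategy G G.V2)
    (v : V) : G.AS m σ1 σ2 v ≤ G.AS n σ1 σ2 v := by
  induction m, hnm using Nat.le_induction with
  | base => exact le_rfl
  | succ m hm ih => exact le_trans (AS_succ_le _ _ _ _) ih

end StochGame
namespace StochGame

set_option linter.unusedSectionVars false
set_option maxHeartbeats 1000000

variable {V : Type*} [Fintype V] [DecidableEq V] {G : StochGame V}

/-! ### Tuples and cylinders -/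

def extT {n : ℕ} (t : Fin (n+1) → V) : ℕ → V := fun i => t ⟨min i n, by omega⟩

lemma extT_of_le {n : ℕ} (t : Fin (n+1) → V) {i : ℕ} (h : i ≤ n) :
    extT t i = t ⟨i, by omega⟩ := by
  unfold extT; congr 1; exact Fin.ext (by simp [Nat.min_eq_left h])

lemma extT_fin {n : ℕ} (t : Fin (n+1) → V) (i : Fin (n+1)) : extT t i.1 = t i := by
  rw [extT_of_le t (by omega)]

lemma extT_zero {n : ℕ} (t : Fin (n+1) → V) : extT t 0 = t 0 := extT_fin t 0

lemma extT_cons_succ {n : ℕ} (a : V) (s : Fin (n+1) → V) (j : ℕ) :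
    extT (Fin.cons a s : Fin (n+2) → V) (j+1) = extT s j := by
  unfold extT
  have : (⟨min (j+1) (n+1), by omega⟩ : Fin (n+2)) = Fin.succ ⟨min j n, by omega⟩ :=
    Fin.ext (by simp [Fin.succ])
  rw [this, Fin.cons_succ]

lemma extT_cons_zero {n : ℕ} (a : V) (s : Fin (n+1) → V) :
    extT (Fin.cons a s : Fin (n+2) → V) 0 = a := by
  rw [extT_zero, Fin.cons_zero]

lemma hist_zero (w : ℕ → V) : hist w 0 = [] := rfl

lemma hist_cons {n : ℕ} (a : V) (s : Fin (n+1) → V) (j : ℕ) :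
    hist (extT (Fin.cons a s : Fin (n+2) → V)) (j+1) = a :: hist (extT s) j := by
  unfold hist
  rw [List.range_succ_eq_map, List.map_cons, List.map_map]
  congr 1
  · exact List.map_congr_left (fun i _ => extT_cons_succ a s i)
  all_goals exact extT_cons_zero a s

lemma prefixProb_nonneg (σ1 : Strategy G G.V1) (σ2 : Strategy G G.V2) (v : V) (n : ℕ)
    (w : ℕ → V) : 0 ≤ G.prefixProb σ1 σ2 v n w := by
  unfold prefixProb
  refine mul_nonneg (by split <;> norm_num) (Finset.prod_nonneg fun i _ => step_nonneg _ _ _ _ _)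

/-- the key combinatorial identity -/
lemma sum_prefix_eq_AS (n : ℕ) (σ1 : Strategy G G.V1) (σ2 : Strategy G G.V2) (v : V) :
    ∑ t : Fin (n+1) → V, (if ∀ i, ¬ G.Terminal (t i) then (1:ℝ) else 0) *
      G.prefixProb σ1 σ2 v n (extT t) = G.AS n σ1 σ2 v := by
  induction n generalizing σ1 σ2 v with
  | zero =>
    rw [AS]
    have h1 : ∀ t : Fin 1 → V, (if ∀ i, ¬ G.Terminal (t i) then (1:ℝ) else 0) *
        G.prefixProb σ1 σ2 v 0 (extT t) =
        if t 0 = v then (if G.Terminal v then 0 else 1) else 0 := by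
      intro t
      by_cases h0 : t 0 = v
      · subst h0
        by_cases hT : G.Terminal (t 0) <;>
          simp [prefixProb, extT_zero, Fin.forall_fin_one, hT]
      · simp [prefixProb, extT_zero, h0]
    rw [Finset.sum_congr rfl (fun t _ => h1 t),
      ← Equiv.sum_comp (Equiv.funUnique (Fin 1) V).symm]
    simp only [Equiv.funUnique_symm_apply]
    have hue : ∀ x : V, (uniqueElim x : Fin 1 → V) 0 = x := fun _ => rfl
    simp only [hue]
    rw [Finset.sum_ite_eq' Finset.univ v (fun _ => if G.Terminal v then (0:ℝ) else 1)]
    simp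
  | succ n ih =>
    rw [AS, ← Equiv.sum_comp (Fin.consEquiv (fun _ : Fin (n+2) => V)), Fintype.sum_prod_type]
    have hce : ∀ (a : V) (s : Fin (n+1) → V),
        (Fin.consEquiv (fun _ : Fin (n+2) => V)) (a, s) = Fin.cons a s := fun _ _ => rfl
    simp only [hce]
    have key : ∀ (a : V) (s : Fin (n+1) → V),
        (if ∀ i, ¬ G.Terminal ((Fin.cons a s : Fin (n+2) → V) i) then (1:ℝ) else 0) *
          G.prefixProb σ1 σ2 v (n+1) (extT (Fin.cons a s)) =
        if a = v then ((if G.Terminal v then (0:ℝ) else 1) *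
          (G.step σ1 σ2 [] v (s 0) * ((if ∀ i, ¬ G.Terminal (s i) then (1:ℝ) else 0) *
            G.prefixProb (σ1.shift v) (σ2.shift v) (s 0) n (extT s)))) else 0 := by
      intro a s
      by_cases hav : a = v
      · subst hav
        rw [if_pos rfl]
        unfold prefixProb
        rw [Finset.prod_range_succ']
        have e0 : extT (Fin.cons a s : Fin (n+2) → V) 0 = a := extT_cons_zero a s
        have e1 : ∀ j, extT (Fin.cons a s : Fin (n+2) → V) (j+1) = extT s j :=
          extT_cons_succ a s
        have hstep0 : G.step σ1 σ2 (hist (extT (Fin.cons a s : Fin (n+2) → V)) 0)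
            (extT (Fin.cons a s : Fin (n+2) → V) 0)
            (extT (Fin.cons a s : Fin (n+2) → V) 1) = G.step σ1 σ2 [] a (s 0) := by
          rw [hist_zero, e0, e1 0, extT_zero]
        have hprod : ∀ i ∈ Finset.range n,
            G.step σ1 σ2 (hist (extT (Fin.cons a s : Fin (n+2) → V)) (i+1))
              (extT (Fin.cons a s : Fin (n+2) → V) (i+1))
              (extT (Fin.cons a s : Fin (n+2) → V) (i+1+1)) =
            G.step (σ1.shift a) (σ2.shift a) (hist (extT s) i) (extT s i) (extT s (i+1)) := by
          intro i _
          rw [hist_cons, e1, e1, step_shift]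
        rw [Finset.prod_congr rfl hprod, hstep0, e0, extT_zero]
        have hforall : (∀ i, ¬ G.Terminal ((Fin.cons a s : Fin (n+2) → V) i)) ↔
            (¬ G.Terminal a ∧ ∀ i, ¬ G.Terminal (s i)) := by
          rw [Fin.forall_fin_succ]
          simp [Fin.cons_zero, Fin.cons_succ]
        by_cases hT : G.Terminal a <;> by_cases hs : ∀ i, ¬ G.Terminal (s i) <;>
          simp [hforall, hT, hs] <;> ring
      · rw [if_neg hav]
        unfold prefixProb
        rw [extT_cons_zero]
        simp [hav]
    rw [Finset.sum_congr rfl (fun a _ => Finset.sum_congr rfl (fun s _ => key a s))]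
    rw [Finset.sum_comm]
    have collapse : ∀ s : Fin (n+1) → V, (∑ a : V, if a = v then ((if G.Terminal v then (0:ℝ) else 1) *
          (G.step σ1 σ2 [] v (s 0) * ((if ∀ i, ¬ G.Terminal (s i) then (1:ℝ) else 0) *
            G.prefixProb (σ1.shift v) (σ2.shift v) (s 0) n (extT s)))) else 0) =
          (if G.Terminal v then (0:ℝ) else 1) *
          (G.step σ1 σ2 [] v (s 0) * ((if ∀ i, ¬ G.Terminal (s i) then (1:ℝ) else 0) *
            G.prefixProb (σ1.shift v) (σ2.shift v) (s 0) n (extT s))) := by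
      intro s
      rw [Finset.sum_ite_eq' Finset.univ v]
      simp
    rw [Finset.sum_congr rfl (fun s _ => collapse s)]
    rw [← Finset.mul_sum]
    by_cases hT : G.Terminal v
    · simp [hT]
    rw [if_neg hT, if_neg hT, one_mul]
    -- now: ∑ s, step [] v (s 0) * (ind s * prefix (s 0)) = ∑ v', step [] v v' * AS n
    have expand : ∀ s : Fin (n+1) → V,
        G.step σ1 σ2 [] v (s 0) * ((if ∀ i, ¬ G.Terminal (s i) then (1:ℝ) else 0) *
          G.prefixProb (σ1.shift v) (σ2.shift v) (s 0) n (extT s)) =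
        ∑ v' : V, G.step σ1 σ2 [] v v' * ((if ∀ i, ¬ G.Terminal (s i) then (1:ℝ) else 0) *
          G.prefixProb (σ1.shift v) (σ2.shift v) v' n (extT s)) := by
      intro s
      rw [Finset.sum_eq_single (s 0)]
      · intro v' _ hne
        have : G.prefixProb (σ1.shift v) (σ2.shift v) v' n (extT s) = 0 := by
          unfold prefixProb
          rw [extT_zero, if_neg (fun h => hne h.symm), zero_mul]
        rw [this]; ring
      · intro h; exact absurd (Finset.mem_univ _) h
    rw [Finset.sum_congr rfl (fun s _ => expand s), Finset.sum_comm]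
    refine Finset.sum_congr rfl fun v' _ => ?_
    rw [← Finset.mul_sum, ih]

end StochGame
namespace StochGame

set_option linter.unusedSectionVars false
set_option maxHeartbeats 1000000

variable {V : Type*} [Fintype V] [DecidableEq V] {G : StochGame V}
variable [MeasurableSpace V] [DiscreteMeasurableSpace V]

lemma measurableSet_cyl (n : ℕ) (w : ℕ → V) : MeasurableSet (cyl n w : Set (ℕ → V)) := by
  have : (cyl n w : Set (ℕ → V)) = ⋂ i ∈ Set.Iic n, (fun ω : ℕ → V => ω i) ⁻¹' {w i} := by
    ext ω; simp [cyl]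
  rw [this]
  exact MeasurableSet.biInter (Set.to_countable _)
    (fun i _ => (measurable_pi_apply i) (measurableSet_singleton _))

/-- the set of plays avoiding terminal vertices for the first `n+1` steps -/
def avoidSet (G : StochGame V) (n : ℕ) : Set (ℕ → V) := {ω | ∀ i ≤ n, ¬ G.Terminal (ω i)}

lemma avoidSet_eq (n : ℕ) :
    G.avoidSet n = ⋃ t ∈ Finset.univ.filter (fun t : Fin (n+1) → V => ∀ i, ¬ G.Terminal (t i)),
      cyl n (extT t) := by
  ext ω
  simp only [Set.mem_iUnion, Finset.mem_filter, Finset.mem_univ, true_and, exists_prop]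
  constructor
  · intro hω
    refine ⟨fun i => ω i.1, fun i => hω i.1 (by omega), fun i hi => ?_⟩
    rw [extT_of_le _ hi]
  · rintro ⟨t, ht, hc⟩ i hi
    rw [hc i hi, extT_of_le _ hi]
    exact ht _

lemma measurableSet_avoidSet (n : ℕ) : MeasurableSet (G.avoidSet n) := by
  rw [avoidSet_eq]
  exact (Finset.univ.filter _).measurableSet_biUnion (fun t _ => measurableSet_cyl n (extT t))

lemma cyl_disjoint {n : ℕ} {t t' : Fin (n+1) → V} (hne : t ≠ t') :
    Disjoint (cyl n (extT t) : Set (ℕ → V)) (cyl n (extT t')) := by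
  rw [Set.disjoint_left]
  intro ω hω hω'
  apply hne
  funext i
  rw [← extT_fin t i, ← extT_fin t' i, ← hω i.1 (by omega), ← hω' i.1 (by omega)]

lemma measure_avoidSet {σ1 : Strategy G G.V1} {σ2 : Strategy G G.V2} {v : V}
    {μ : Measure (ℕ → V)} (hμ : G.IsPathMeasure σ1 σ2 v μ) (n : ℕ) :
    μ (G.avoidSet n) = ENNReal.ofReal (G.AS n σ1 σ2 v) := by
  rw [avoidSet_eq]
  rw [measure_biUnion_finset ?hd (fun t _ => measurableSet_cyl n (extT t))]
  case hd =>
    intro t ht t' ht' hne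
    exact cyl_disjoint hne
  rw [← sum_prefix_eq_AS n σ1 σ2 v, ← Finset.sum_filter_add_sum_filter_not Finset.univ
    (fun t : Fin (n+1) → V => ∀ i, ¬ G.Terminal (t i))
      (fun t => (if ∀ i, ¬ G.Terminal (t i) then (1:ℝ) else 0) * G.prefixProb σ1 σ2 v n (extT t))]
  have h2 : ∑ t ∈ Finset.univ.filter
      (fun t : Fin (n+1) → V => ¬ ∀ i, ¬ G.Terminal (t i)),
      (if ∀ i, ¬ G.Terminal (t i) then (1:ℝ) else 0) * G.prefixProb σ1 σ2 v n (extT t) = 0 := by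
    refine Finset.sum_eq_zero fun t ht => ?_
    rw [Finset.mem_filter] at ht
    rw [if_neg ht.2, zero_mul]
  rw [h2, add_zero]
  rw [ENNReal.ofReal_sum_of_nonneg (fun t ht =>
    mul_nonneg (by split <;> norm_num) (prefixProb_nonneg σ1 σ2 v n (extT t)))]
  refine Finset.sum_congr rfl fun t ht => ?_
  rw [Finset.mem_filter] at ht
  rw [hμ.2 n (extT t), if_pos ht.2, one_mul]

/-! ### Inconsistent plays are null -/

/-- plays whose `j`-th step has probability zero -/
def badStep (G : StochGame V) (σ1 : Strategy G G.V1) (σ2 : Strategy G G.V2) (j : ℕ) :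
    Set (ℕ → V) := {ω | G.step σ1 σ2 (hist ω j) (ω j) (ω (j+1)) = 0}

def Bad (G : StochGame V) (σ1 : Strategy G G.V1) (σ2 : Strategy G G.V2) : Set (ℕ → V) :=
  ⋃ j, G.badStep σ1 σ2 j

lemma hist_eq_of_agree {ω w : ℕ → V} {j n : ℕ} (hjn : j ≤ n) (h : ∀ i ≤ n, ω i = w i) :
    hist ω j = hist w j := by
  unfold hist
  exact List.map_congr_left fun i hi => h i (by simp at hi; omega)

lemma badStep_eq (σ1 : Strategy G G.V1) (σ2 : Strategy G G.V2) (j : ℕ) :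
    G.badStep σ1 σ2 j = ⋃ t ∈ Finset.univ.filter (fun t : Fin (j+2) → V =>
      G.step σ1 σ2 (hist (extT t) j) (extT t j) (extT t (j+1)) = 0), cyl (j+1) (extT t) := by
  ext ω
  simp only [Set.mem_iUnion, Finset.mem_filter, Finset.mem_univ, true_and, exists_prop]
  constructor
  · intro hω
    refine ⟨fun i => ω i.1, ?_, fun i hi => by rw [extT_of_le _ hi]⟩
    have h1 : ∀ i ≤ j + 1, ω i = extT (fun i : Fin (j+2) => ω i.1) i := fun i hi => by
      rw [extT_of_le _ hi]
    rw [← hist_eq_of_agree (by omega) h1, ← h1 j (by omega), ← h1 (j+1) (by omega)]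
    exact hω
  · rintro ⟨t, ht, hc⟩
    show G.step σ1 σ2 (hist ω j) (ω j) (ω (j+1)) = 0
    rw [hist_eq_of_agree (by omega) hc, hc j (by omega), hc (j+1) (by omega)]
    exact ht

lemma measurableSet_badStep (σ1 : Strategy G G.V1) (σ2 : Strategy G G.V2) (j : ℕ) :
    MeasurableSet (G.badStep σ1 σ2 j) := by
  rw [badStep_eq]
  exact (Finset.univ.filter _).measurableSet_biUnion (fun t _ => measurableSet_cyl _ _)

lemma measurableSet_Bad (σ1 : Strategy G G.V1) (σ2 : Strategy G G.V2) :
    MeasurableSet (G.Bad σ1 σ2) :=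
  MeasurableSet.iUnion (fun j => measurableSet_badStep σ1 σ2 j)

lemma badStep_null {σ1 : Strategy G G.V1} {σ2 : Strategy G G.V2} {v : V}
    {μ : Measure (ℕ → V)} (hμ : G.IsPathMeasure σ1 σ2 v μ) (j : ℕ) :
    μ (G.badStep σ1 σ2 j) = 0 := by
  rw [badStep_eq]
  refine le_antisymm (le_trans (measure_biUnion_finset_le _ _) (le_of_eq ?_)) zero_le
  refine Finset.sum_eq_zero fun t ht => ?_
  rw [Finset.mem_filter] at ht
  rw [hμ.2 (j+1) (extT t)]
  have : G.prefixProb σ1 σ2 v (j+1) (extT t) = 0 := by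
    unfold prefixProb
    rw [Finset.prod_eq_zero (Finset.mem_range.2 (show j < j + 1 by omega)) ht.2, mul_zero]
  rw [this, ENNReal.ofReal_zero]

lemma Bad_null {σ1 : Strategy G G.V1} {σ2 : Strategy G G.V2} {v : V}
    {μ : Measure (ℕ → V)} (hμ : G.IsPathMeasure σ1 σ2 v μ) :
    μ (G.Bad σ1 σ2) = 0 :=
  measure_iUnion_null fun j => badStep_null hμ j

lemma step_pos_of_not_bad {σ1 : Strategy G G.V1} {σ2 : Strategy G G.V2} {ω : ℕ → V}
    (hω : ω ∉ G.Bad σ1 σ2) (j : ℕ) :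
    0 < G.step σ1 σ2 (hist ω j) (ω j) (ω (j+1)) := by
  rcases lt_or_eq_of_le (step_nonneg σ1 σ2 (hist ω j) (ω j) (ω (j+1))) with h | h
  · exact h
  · exact absurd (Set.mem_iUnion.2 ⟨j, h.symm⟩) hω

end StochGame
namespace StochGame

set_option linter.unusedSectionVars false
set_option maxHeartbeats 1000000

variable {V : Type*} [Fintype V] [DecidableEq V] {G : StochGame V}

lemma hist_succ (w : ℕ → V) (n : ℕ) : hist w (n+1) = hist w n ++ [w n] := by
  unfold hist
  rw [List.range_succ, List.map_append, List.map_singleton]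

lemma count_hist_succ (w : ℕ → V) (u : V) (n : ℕ) :
    (hist w (n+1)).count u = (hist w n).count u + (if w n = u then 1 else 0) := by
  rw [hist_succ, List.count_append]
  simp [List.count_singleton']

lemma count_hist_no_visit (w : ℕ → V) (u : V) (n : ℕ) :
    ∀ d, (∀ m, n ≤ m → m < n + d → w m ≠ u) →
      (hist w (n + d)).count u = (hist w n).count u := by
  intro d
  induction d with
  | zero => intro _; rfl
  | succ d ih =>
    intro h
    have : n + (d + 1) = (n + d) + 1 := by omega
    rw [this, count_hist_succ, if_neg (h (n+d) (by omega) (by omega)), add_zero]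
    exact ih fun m hm hm' => h m hm (by omega)

/-- along a play where `u` occurs infinitely often, the visit counter takes every
value of the form `count + j` at some visit -/
lemma visit_chain {ω : ℕ → V} {u : V} (hinf : u ∈ infOcc ω) (j : ℕ) :
    ∀ n₀, ω n₀ = u → ∃ n, n₀ ≤ n ∧ ω n = u ∧
      (hist ω n).count u = (hist ω n₀).count u + j := by
  induction j with
  | zero => intro n₀ h0; exact ⟨n₀, le_rfl, h0, by omega⟩
  | succ j ih =>
    intro n₀ h0
    obtain ⟨n, hn0, hnu, hcnt⟩ := ih n₀ h0
    have hex : ∃ m, n < m ∧ ω m = u := by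
      obtain ⟨m, hm, hmu⟩ := hinf (n+1)
      exact ⟨m, by omega, hmu⟩
    classical
    set m := Nat.find hex with hm_def
    obtain ⟨hmn, hmu⟩ := Nat.find_spec hex
    refine ⟨m, by omega, hmu, ?_⟩
    have hnov : ∀ k, n + 1 ≤ k → k < m → ω k ≠ u := by
      intro k hk hkm hku
      exact absurd ⟨by omega, hku⟩ (Nat.find_min hex hkm)
    have hm' : m = (n + 1) + (m - (n+1)) := by omega
    rw [hm', count_hist_no_visit ω u (n+1) _ (fun k hk hk' => hnov k hk (by omega)),
      count_hist_succ, if_pos hnu]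
    omega

lemma exists_residue (X r L : ℕ) (hL : 0 < L) (hr : r < L) : ∃ j, (X + j) % L = r := by
  rcases le_or_gt (X % L) r with h | h
  · refine ⟨r - X % L, ?_⟩
    rw [Nat.add_mod]
    have h1 : (r - X % L) % L = r - X % L := Nat.mod_eq_of_lt (by omega)
    rw [h1]
    have h2 : X % L + (r - X % L) = r := by omega
    rw [h2, Nat.mod_eq_of_lt hr]
  · refine ⟨L + r - X % L, ?_⟩
    have hXL : X % L < L := Nat.mod_lt _ hL
    rw [Nat.add_mod]
    have h1 : (L + r - X % L) % L = L + r - X % L := Nat.mod_eq_of_lt (by omega)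
    rw [h1]
    have : X % L + (L + r - X % L) = L + r := by omega
    rw [this, Nat.add_mod_left, Nat.mod_eq_of_lt hr]

lemma fair_play_of_consistent {σ1 : Strategy G G.V1} {c₀ : V → ℕ} {ω : ℕ → V}
    (hω : ∀ j, 0 < G.step σ1 (G.rr c₀) (hist ω j) (ω j) (ω (j+1))) : ω ∈ G.FP2 := by
  intro u hu2 huinf u' hu'
  have hδ : 0 < G.δ u u' := hu'
  obtain ⟨r, hr, hpick⟩ := exists_pick_target hδ
  intro N
  obtain ⟨n₀, hn₀, hn₀u⟩ := huinf N
  obtain ⟨j, hj⟩ := exists_residue (c₀ u + (hist ω n₀).count u) r _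
    (G.succList_length_pos u) hr
  obtain ⟨n, hn, hnu, hcnt⟩ := visit_chain huinf j n₀ hn₀u
  have hstep := hω n
  have hu1 : u ∉ G.V1 := fun h1 => G.disj12 u ⟨h1, hu2⟩
  rw [hnu] at hstep
  unfold step at hstep
  rw [if_neg hu1, if_pos hu2] at hstep
  have heq : ω (n+1) = G.pick u (c₀ u + (hist ω n).count u) := by
    by_contra hne
    have : (G.rr c₀).f (hist ω n) u (ω (n+1)) = 0 := by
      show (if ω (n+1) = G.pick u (c₀ u + (hist ω n).count u) then (1:ℝ) else 0) = 0
      rw [if_neg hne]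
    rw [this] at hstep
    exact lt_irrefl _ hstep
  refine ⟨n + 1, by omega, ?_⟩
  rw [heq, hpick _ ?_]
  rw [hcnt, ← Nat.add_assoc] at *
  exact hj

/-- round-robin strategies are fair -/
lemma rr_fair [MeasurableSpace V] [DiscreteMeasurableSpace V] (c₀ : V → ℕ) :
    G.Fair (G.rr c₀) := by
  intro σ1 v μ hμ
  haveI : IsProbabilityMeasure μ := hμ.1
  have hsub : (G.Bad σ1 (G.rr c₀))ᶜ ⊆ G.FP2 := by
    intro ω hω
    exact fair_play_of_consistent (fun j => step_pos_of_not_bad hω j)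
  have h1 : μ (G.Bad σ1 (G.rr c₀))ᶜ = 1 := by
    rw [measure_compl (measurableSet_Bad σ1 (G.rr c₀)) (measure_ne_top μ _),
      Bad_null hμ, measure_univ, tsub_zero]
  refine le_antisymm prob_le_one ?_
  calc (1 : ℝ≥0∞) = μ (G.Bad σ1 (G.rr c₀))ᶜ := h1.symm
    _ ≤ μ G.FP2 := measure_mono hsub

end StochGame
namespace StochGame

set_option linter.unusedSectionVars false
set_option maxHeartbeats 1000000

/-- a common multiple of all successor-list lengths -/
def KK (V : Type*) [Fintype V] : ℕ := (Fintype.card V).factorial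

instance {V : Type*} [Fintype V] : NeZero (KK V) := ⟨Nat.factorial_ne_zero _⟩

/-- counter space -/
abbrev Cnt (V : Type*) [Fintype V] := V → ZMod (KK V)

variable {V : Type*} [Fintype V] [DecidableEq V] {G : StochGame V}

noncomputable def castCnt (c₀ : V → ℕ) : Cnt V := fun u => (c₀ u : ZMod (KK V))

/-- increment the counter of `v` (in the quotient counter space) -/
noncomputable def cbump (v : V) (c : Cnt V) : Cnt V := c + Pi.single v 1

lemma succList_length_dvd (G : StochGame V) (u : V) : (G.succList u).length ∣ KK V := by
  apply Nat.dvd_factorial (G.succList_length_pos u)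
  rw [succList, Finset.length_toList]
  exact Finset.card_le_univ _

lemma pick_val_natCast (G : StochGame V) (u : V) (k : ℕ) :
    G.pick u ((k : ZMod (KK V)).val) = G.pick u k := by
  apply pick_congr
  rw [ZMod.val_natCast]
  exact Nat.mod_mod_of_dvd k (G.succList_length_dvd u)

lemma castCnt_bump (c₀ : V → ℕ) (v : V) :
    castCnt (bump v c₀) = cbump v (castCnt c₀) := by
  funext u
  simp only [castCnt, bump, cbump, Pi.add_apply, Pi.single_apply]
  by_cases h : u = v <;> simp [h]

lemma castCnt_add_count (c₀ : V → ℕ) :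
    castCnt (fun x => c₀ x + ([] : List V).count x) = castCnt c₀ := by
  funext u; simp [castCnt]

/-- value iteration: the maximal probability of avoiding terminals for `n` steps,
on the product of the game with the round-robin counter -/
noncomputable def yf (G : StochGame V) : ℕ → V × Cnt V → ℝ
  | 0, s => if G.Terminal s.1 then 0 else 1
  | (n+1), s =>
    if G.Terminal s.1 then 0
    else if h1 : s.1 ∈ G.V1 then
      (G.postF s.1).sup' (G.postF_nonempty s.1)
        (fun v' => G.yf n (v', cbump s.1 s.2))
    else if s.1 ∈ G.V2 then G.yf n (G.pick s.1 (s.2 s.1).val, cbump s.1 s.2)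
    else ∑ v' : V, G.δ s.1 v' * G.yf n (v', cbump s.1 s.2)

lemma yf_nonneg (n : ℕ) (s : V × Cnt V) : 0 ≤ G.yf n s := by
  induction n generalizing s with
  | zero => rw [yf]; split <;> norm_num
  | succ n ih =>
    rw [yf]; split
    · exact le_rfl
    split
    · obtain ⟨a, ha⟩ := G.postF_nonempty s.1
      exact le_trans (ih _)
        (Finset.le_sup' (fun v' => G.yf n (v', cbump s.1 s.2)) ha)
    split
    · exact ih _
    · exact Finset.sum_nonneg fun v' _ => mul_nonneg (G.δ_nonneg _ _) (ih _)

lemma yf_le_one (n : ℕ) (s : V × Cnt V) : G.yf n s ≤ 1 := by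
  induction n generalizing s with
  | zero => rw [yf]; split <;> norm_num
  | succ n ih =>
    rw [yf]; split
    · norm_num
    split
    · exact Finset.sup'_le _ _ fun v' _ => ih _
    split
    · exact ih _
    · rename_i hT h1 h2
      have hP : s.1 ∈ G.VP := by rcases G.cover s.1 with h | h | h <;> tauto
      calc ∑ v' : V, G.δ s.1 v' * G.yf n (v', cbump s.1 s.2)
          ≤ ∑ v' : V, G.δ s.1 v' * 1 :=
            Finset.sum_le_sum fun v' _ => mul_le_mul_of_nonneg_left (ih _) (G.δ_nonneg _ _)
        _ = 1 := by simpa using G.prob s.1 hP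

lemma yf_terminal (n : ℕ) {s : V × Cnt V} (hv : G.Terminal s.1) : G.yf n s = 0 := by
  cases n <;> rw [yf] <;> simp [hv]

lemma yf_succ_le (n : ℕ) (s : V × Cnt V) : G.yf (n+1) s ≤ G.yf n s := by
  induction n generalizing s with
  | zero =>
    conv_rhs => rw [yf]
    split
    · exact le_of_eq (yf_terminal _ (by assumption))
    · exact yf_le_one _ _
  | succ n ih =>
    conv_lhs => rw [yf]
    conv_rhs => rw [yf]
    split
    · exact le_rfl
    split
    · exact Finset.sup'_mono_fun fun v' _ => ih _
    split
    · exact ih _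
    · exact Finset.sum_le_sum fun v' _ => mul_le_mul_of_nonneg_left (ih _) (G.δ_nonneg _ _)

lemma yf_antitone {n m : ℕ} (hnm : n ≤ m) (s : V × Cnt V) : G.yf m s ≤ G.yf n s := by
  induction m, hnm using Nat.le_induction with
  | base => exact le_rfl
  | succ m hm ih => exact le_trans (yf_succ_le m s) ih

/-- the limit value: maximal probability of avoiding terminals forever -/
noncomputable def ylim (G : StochGame V) (s : V × Cnt V) : ℝ := ⨅ n, G.yf n s

lemma ylim_nonneg (s : V × Cnt V) : 0 ≤ G.ylim s :=
  le_ciInf fun n => yf_nonneg n s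

lemma ylim_le_yf (n : ℕ) (s : V × Cnt V) : G.ylim s ≤ G.yf n s :=
  ciInf_le ⟨0, fun x ⟨n, hn⟩ => hn ▸ yf_nonneg n s⟩ n

lemma tendsto_yf_ylim (s : V × Cnt V) :
    Filter.Tendsto (fun n => G.yf n s) Filter.atTop (nhds (G.ylim s)) :=
  tendsto_atTop_ciInf (fun n m hnm => yf_antitone hnm s)
    ⟨0, fun x ⟨n, hn⟩ => hn ▸ yf_nonneg n s⟩

lemma ylim_terminal {v : V} (c : Cnt V) (hv : G.Terminal v) : G.ylim (v, c) = 0 :=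
  le_antisymm (le_of_le_of_eq (ylim_le_yf 0 _) (yf_terminal 0 hv)) (ylim_nonneg _)

lemma tendsto_finset_sup' {ι : Type*} (s : Finset ι) (hs : s.Nonempty) (F : ℕ → ι → ℝ)
    (L : ι → ℝ) (h : ∀ i ∈ s, Filter.Tendsto (fun n => F n i) Filter.atTop (nhds (L i))) :
    Filter.Tendsto (fun n => s.sup' hs (fun i => F n i)) Filter.atTop (nhds (s.sup' hs L)) := by
  induction hs using Finset.Nonempty.cons_induction with
  | singleton a => simpa using h _ (by simp)
  | cons a s ha hs ih =>
    have hrw : ∀ g : ι → ℝ, (Finset.cons a s ha).sup' (Finset.cons_nonempty ha) g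
        = g a ⊔ s.sup' hs g := fun g => Finset.sup'_cons hs g
    simp only [hrw]
    exact Filter.Tendsto.max (h a (by simp)) (ih fun i hi => h i (by simp [hi]))

lemma ylim_fix {v : V} {c : Cnt V} (hT : ¬ G.Terminal v) :
    G.ylim (v, c) = (if v ∈ G.V1 then
        (G.postF v).sup' (G.postF_nonempty v) (fun v' => G.ylim (v', cbump v c))
      else if v ∈ G.V2 then G.ylim (G.pick v (c v).val, cbump v c)
      else ∑ v' : V, G.δ v v' * G.ylim (v', cbump v c)) := by
  have hL : Filter.Tendsto (fun n => G.yf (n+1) (v, c)) Filter.atTop (nhds (G.ylim (v, c))) :=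
    (tendsto_yf_ylim (v, c)).comp (Filter.tendsto_add_atTop_nat 1)
  have hR : Filter.Tendsto (fun n => G.yf (n+1) (v, c)) Filter.atTop (nhds
      (if v ∈ G.V1 then
        (G.postF v).sup' (G.postF_nonempty v) (fun v' => G.ylim (v', cbump v c))
      else if v ∈ G.V2 then G.ylim (G.pick v (c v).val, cbump v c)
      else ∑ v' : V, G.δ v v' * G.ylim (v', cbump v c))) := by
    have hyf : ∀ n, G.yf (n+1) (v, c) = (if v ∈ G.V1 then
        (G.postF v).sup' (G.postF_nonempty v) (fun v' => G.yf n (v', cbump v c))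
      else if v ∈ G.V2 then G.yf n (G.pick v (c v).val, cbump v c)
      else ∑ v' : V, G.δ v v' * G.yf n (v', cbump v c)) := by
      intro n; rw [yf]; rw [if_neg hT]; split_ifs <;> rfl
    simp only [hyf]
    split_ifs with h1 h2
    · exact tendsto_finset_sup' _ _ _ _ fun v' _ => tendsto_yf_ylim _
    · exact tendsto_yf_ylim _
    · exact tendsto_finset_sum _ fun v' _ =>
        (tendsto_yf_ylim (v', cbump v c)).const_mul _
  exact tendsto_nhds_unique hL hR


end StochGame
namespace StochGame
set_option linter.unusedSectionVars false
variable {V : Type*} [Fintype V] [DecidableEq V] {G : StochGame V}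
/-- an argmax successor for Player 1 w.r.t. the limit values -/
noncomputable def amax (G : StochGame V) (v : V) (c : Cnt V) : V :=
  Classical.choose (Finset.exists_max_image (G.postF v)
    (fun v' => G.ylim (v', cbump v c)) (G.postF_nonempty v))

lemma amax_props (G : StochGame V) (v : V) (c : Cnt V) :
    G.amax v c ∈ G.postF v ∧ ∀ a ∈ G.postF v,
      G.ylim (a, cbump v c) ≤ G.ylim (G.amax v c, cbump v c) := by
  unfold amax
  exact Classical.choose_spec (Finset.exists_max_image (G.postF v)
    (fun v' => G.ylim (v', cbump v c)) (G.postF_nonempty v))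

lemma amax_mem (G : StochGame V) (v : V) (c : Cnt V) : G.amax v c ∈ G.postF v :=
  (G.amax_props v c).1

lemma amax_spec (G : StochGame V) (v : V) (c : Cnt V) :
    ∀ a ∈ G.postF v, G.ylim (a, cbump v c) ≤ G.ylim (G.amax v c, cbump v c) :=
  (G.amax_props v c).2

lemma ylim_V1_amax {v : V} {c : Cnt V} (hT : ¬ G.Terminal v) (h1 : v ∈ G.V1) :
    G.ylim (v, c) = G.ylim (G.amax v c, cbump v c) := by
  rw [ylim_fix hT, if_pos h1]
  apply le_antisymm
  · exact Finset.sup'_le _ _ (G.amax_spec v c)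
  · exact Finset.le_sup' (fun v' => G.ylim (v', cbump v c)) (G.amax_mem v c)

/-- the Player 1 strategy that always moves to an argmax successor -/
noncomputable def σstar (G : StochGame V) (c₀ : V → ℕ) : Strategy G G.V1 where
  f h u u' := if u' = G.amax u (castCnt (fun x => c₀ x + h.count x)) then 1 else 0
  nonneg h u u' := by
    by_cases h' : u' = G.amax u (castCnt (fun x => c₀ x + h.count x)) <;> simp [h']
  sum_one h u := by simp
  support h u _ u' hpos := by
    have : u' = G.amax u (castCnt (fun x => c₀ x + h.count x)) := by
      by_contra hne; simp [hne] at hpos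
    rw [this, ← mem_postF]
    exact G.amax_mem _ _

lemma σstar_shift_f (c₀ : V → ℕ) (v : V) (h : List V) (u u' : V) :
    ((G.σstar c₀).shift v).f h u u' = (G.σstar (bump v c₀)).f h u u' := by
  have harg : (fun x => c₀ x + (v :: h).count x) = (fun x => bump v c₀ x + h.count x) := by
    funext x
    by_cases hx : x = v
    · subst hx; simp [List.count_cons, bump]; omega
    · simp [List.count_cons, bump, hx, Ne.symm hx]
  show (if u' = G.amax u (castCnt (fun x => c₀ x + (v :: h).count x)) then (1:ℝ) else 0) = _
  rw [harg]
  rfl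

end StochGame
namespace StochGame

set_option linter.unusedSectionVars false
set_option maxHeartbeats 1000000

variable {V : Type*} [Fintype V] [DecidableEq V] {G : StochGame V}

/-- against the round-robin strategy, any Player 1 strategy avoids terminals for `n` steps
with probability at most `yf n` -/
lemma AS_le_yf (n : ℕ) (σ1 : Strategy G G.V1) (c₀ : V → ℕ) (v : V) :
    G.AS n σ1 (G.rr c₀) v ≤ G.yf n (v, castCnt c₀) := by
  induction n generalizing σ1 c₀ v with
  | zero => rw [AS, yf]
  | succ n ih =>
    rw [AS, yf]
    split
    · exact le_rfl
    rename_i hT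
    have hcongr : ∀ v', G.AS n (σ1.shift v) ((G.rr c₀).shift v) v'
        = G.AS n (σ1.shift v) (G.rr (bump v c₀)) v' :=
      fun v' => AS_congr n (fun _ _ _ => rfl) (rr_shift_f c₀ v) v'
    by_cases h1 : v ∈ G.V1
    · rw [dif_pos h1]
      calc ∑ v' : V, G.step σ1 (G.rr c₀) [] v v' * G.AS n (σ1.shift v) ((G.rr c₀).shift v) v'
          ≤ ∑ v' : V, G.step σ1 (G.rr c₀) [] v v' * (G.postF v).sup' (G.postF_nonempty v)
              (fun u' => G.yf n (u', cbump v (castCnt c₀))) := by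
            refine Finset.sum_le_sum fun v' _ => ?_
            rcases lt_or_eq_of_le (step_nonneg σ1 (G.rr c₀) [] v v') with hpos | hzero
            · refine mul_le_mul_of_nonneg_left ?_ (le_of_lt hpos)
              rw [hcongr v']
              have hb := ih (σ1.shift v) (bump v c₀) v'
              rw [castCnt_bump] at hb
              refine le_trans hb ?_
              have hv' : v' ∈ G.postF v := mem_postF.2 (σ1.support [] v h1 v' (by
                unfold step at hpos; rwa [if_pos h1] at hpos))
              exact Finset.le_sup' (fun u' => G.yf n (u', cbump v (castCnt c₀))) hv'
            · rw [← hzero, zero_mul, zero_mul]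
        _ = (G.postF v).sup' (G.postF_nonempty v)
              (fun u' => G.yf n (u', cbump v (castCnt c₀))) := by
            rw [← Finset.sum_mul, step_sum_one σ1 (G.rr c₀) [] v, one_mul]
    rw [dif_neg h1]
    by_cases h2 : v ∈ G.V2
    · rw [if_pos h2]
      have hstep : ∀ v', G.step σ1 (G.rr c₀) [] v v' =
          if v' = G.pick v (c₀ v) then (1:ℝ) else 0 := by
        intro v'
        unfold step
        rw [if_neg h1, if_pos h2]
        show (if v' = G.pick v (c₀ v + ([] : List V).count v) then (1:ℝ) else 0) = _
        norm_num
      have hsum : ∑ v' : V, G.step σ1 (G.rr c₀) [] v v' *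
          G.AS n (σ1.shift v) ((G.rr c₀).shift v) v'
          = G.AS n (σ1.shift v) ((G.rr c₀).shift v) (G.pick v (c₀ v)) := by
        rw [Finset.sum_congr rfl (fun v' _ => by rw [hstep v', ite_mul, one_mul, zero_mul])]
        rw [Finset.sum_ite_eq' Finset.univ (G.pick v (c₀ v))
          (fun v' => G.AS n (σ1.shift v) ((G.rr c₀).shift v) v'), if_pos (Finset.mem_univ _)]
      rw [hsum, hcongr]
      have hb := ih (σ1.shift v) (bump v c₀) (G.pick v (c₀ v))
      rw [castCnt_bump] at hb
      have hp : G.pick v ((castCnt c₀ v).val) = G.pick v (c₀ v) := G.pick_val_natCast v (c₀ v)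
      rw [hp]
      exact hb
    · rw [if_neg h2]
      have hstep : ∀ v', G.step σ1 (G.rr c₀) [] v v' = G.δ v v' := fun v' => by
        unfold step; rw [if_neg h1, if_neg h2]
      refine Finset.sum_le_sum fun v' _ => ?_
      rw [hstep, hcongr]
      have hb := ih (σ1.shift v) (bump v c₀) v'
      rw [castCnt_bump] at hb
      exact mul_le_mul_of_nonneg_left hb (G.δ_nonneg _ _)

/-- the strategy `σstar` avoids terminals for `n` steps with probability at least `ylim` -/
lemma ylim_le_AS (n : ℕ) (c₀ : V → ℕ) (v : V) :
    G.ylim (v, castCnt c₀) ≤ G.AS n (G.σstar c₀) (G.rr c₀) v := by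
  induction n generalizing c₀ v with
  | zero =>
    rw [AS]
    split
    · exact le_of_eq (ylim_terminal _ (by assumption))
    · rename_i hT
      have h0 := ylim_le_yf (G := G) 0 (v, castCnt c₀)
      rw [yf] at h0
      simpa [hT] using h0
  | succ n ih =>
    rw [AS]
    split
    · exact le_of_eq (ylim_terminal _ (by assumption))
    rename_i hT
    have hcongr : ∀ v', G.AS n ((G.σstar c₀).shift v) ((G.rr c₀).shift v) v'
        = G.AS n (G.σstar (bump v c₀)) (G.rr (bump v c₀)) v' :=
      fun v' => AS_congr n (σstar_shift_f c₀ v) (rr_shift_f c₀ v) v'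
    by_cases h1 : v ∈ G.V1
    · have hstep : ∀ v', G.step (G.σstar c₀) (G.rr c₀) [] v v' =
          if v' = G.amax v (castCnt c₀) then (1:ℝ) else 0 := by
        intro v'
        unfold step
        rw [if_pos h1]
        show (if v' = G.amax v (castCnt (fun x => c₀ x + ([] : List V).count x))
          then (1:ℝ) else 0) = _
        rw [castCnt_add_count]
      have hsum : ∑ v' : V, G.step (G.σstar c₀) (G.rr c₀) [] v v' *
          G.AS n ((G.σstar c₀).shift v) ((G.rr c₀).shift v) v'
          = G.AS n ((G.σstar c₀).shift v) ((G.rr c₀).shift v) (G.amax v (castCnt c₀)) := by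
        rw [Finset.sum_congr rfl (fun v' _ => by rw [hstep v', ite_mul, one_mul, zero_mul])]
        rw [Finset.sum_ite_eq' Finset.univ (G.amax v (castCnt c₀))
          (fun v' => G.AS n ((G.σstar c₀).shift v) ((G.rr c₀).shift v) v'),
          if_pos (Finset.mem_univ _)]
      rw [hsum, hcongr]
      have hb := ih (bump v c₀) (G.amax v (castCnt c₀))
      rw [castCnt_bump] at hb
      exact le_trans (le_of_eq (ylim_V1_amax hT h1)) hb
    by_cases h2 : v ∈ G.V2
    · have hstep : ∀ v', G.step (G.σstar c₀) (G.rr c₀) [] v v' =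
          if v' = G.pick v (c₀ v) then (1:ℝ) else 0 := by
        intro v'
        unfold step
        rw [if_neg h1, if_pos h2]
        show (if v' = G.pick v (c₀ v + ([] : List V).count v) then (1:ℝ) else 0) = _
        norm_num
      have hsum : ∑ v' : V, G.step (G.σstar c₀) (G.rr c₀) [] v v' *
          G.AS n ((G.σstar c₀).shift v) ((G.rr c₀).shift v) v'
          = G.AS n ((G.σstar c₀).shift v) ((G.rr c₀).shift v) (G.pick v (c₀ v)) := by
        rw [Finset.sum_congr rfl (fun v' _ => by rw [hstep v', ite_mul, one_mul, zero_mul])]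
        rw [Finset.sum_ite_eq' Finset.univ (G.pick v (c₀ v))
          (fun v' => G.AS n ((G.σstar c₀).shift v) ((G.rr c₀).shift v) v'),
          if_pos (Finset.mem_univ _)]
      rw [hsum, hcongr]
      have hb := ih (bump v c₀) (G.pick v (c₀ v))
      rw [castCnt_bump] at hb
      refine le_trans (le_of_eq ?_) hb
      rw [ylim_fix hT, if_neg h1, if_pos h2]
      have hp : G.pick v ((castCnt c₀ v).val) = G.pick v (c₀ v) := G.pick_val_natCast v (c₀ v)
      rw [hp]
    · have hstep : ∀ v', G.step (G.σstar c₀) (G.rr c₀) [] v v' = G.δ v v' := fun v' => by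
        unfold step; rw [if_neg h1, if_neg h2]
      rw [ylim_fix hT, if_neg h1, if_neg h2]
      refine Finset.sum_le_sum fun v' _ => ?_
      rw [hstep, hcongr]
      have hb := ih (bump v c₀) v'
      rw [castCnt_bump] at hb
      exact mul_le_mul_of_nonneg_left hb (G.δ_nonneg _ _)

end StochGame
namespace StochGame

set_option linter.unusedSectionVars false
set_option maxHeartbeats 1000000

variable {V : Type*} [Fintype V] [DecidableEq V] {G : StochGame V}
variable [MeasurableSpace V] [DiscreteMeasurableSpace V]

lemma iInter_avoidSet : ⋂ n, G.avoidSet n = (G.ReachT)ᶜ := by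
  ext ω
  simp only [Set.mem_iInter, Set.mem_compl_iff]
  constructor
  · rintro h ⟨i, hi⟩
    exact (h i) i le_rfl hi
  · intro h n i _
    exact fun hT => h ⟨i, hT⟩

lemma measurableSet_ReachT : MeasurableSet (G.ReachT) := by
  rw [← compl_compl G.ReachT, ← iInter_avoidSet]
  exact (MeasurableSet.iInter fun n => measurableSet_avoidSet n).compl

lemma ylim_eq_zero
    (P : Strategy G G.V1 → Strategy G G.V2 → V → Measure (ℕ → V))
    (hP : ∀ σ1 σ2 w, G.IsPathMeasure σ1 σ2 w (P σ1 σ2 w))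
    (hstop : G.StoppingUnderFairness) (s : V × Cnt V) : G.ylim s = 0 := by
  obtain ⟨v, c⟩ := s
  refine le_antisymm ?_ (ylim_nonneg _)
  by_contra hpos
  push_neg at hpos
  set c₀ : V → ℕ := fun u => (c u).val with hc₀
  have hcast : castCnt c₀ = c := funext fun u => ZMod.natCast_rightInverse (c u)
  set μ := P (G.σstar c₀) (G.rr c₀) v with hμdef
  have hμ := hP (G.σstar c₀) (G.rr c₀) v
  haveI : IsProbabilityMeasure μ := hμ.1
  have hreach : μ G.ReachT = 1 := hstop _ _ (rr_fair c₀) v μ hμ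
  have hAnti : Antitone (fun n => G.avoidSet n) := fun n m hnm ω hω i hi =>
    hω i (le_trans hi hnm)
  have hcompl : μ (G.ReachT)ᶜ = 0 := by
    rw [measure_compl measurableSet_ReachT (measure_ne_top _ _), hreach, measure_univ,
      tsub_self]
  have htend := tendsto_measure_iInter_atTop (μ := μ) (s := fun n => G.avoidSet n)
    (fun n => (measurableSet_avoidSet n).nullMeasurableSet) hAnti ⟨0, measure_ne_top _ _⟩
  rw [iInter_avoidSet, hcompl] at htend
  have hbound : ∀ n, ENNReal.ofReal (G.ylim (v, c)) ≤ (μ ∘ fun n => G.avoidSet n) n := by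
    intro n
    have h1 : μ (G.avoidSet n) = ENNReal.ofReal (G.AS n (G.σstar c₀) (G.rr c₀) v) :=
      measure_avoidSet hμ n
    have h2 := ylim_le_AS (G := G) n c₀ v
    rw [hcast] at h2
    show ENNReal.ofReal (G.ylim (v, c)) ≤ μ (G.avoidSet n)
    rw [h1]
    exact ENNReal.ofReal_le_ofReal h2
  have hle := ge_of_tendsto htend (Filter.Eventually.of_forall hbound)
  have h0 : (0:ℝ≥0∞) < ENNReal.ofReal (G.ylim (v, c)) := ENNReal.ofReal_pos.2 hpos
  exact absurd (lt_of_lt_of_le h0 hle) (lt_irrefl 0)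

lemma exists_uniform_N
    (P : Strategy G G.V1 → Strategy G G.V2 → V → Measure (ℕ → V))
    (hP : ∀ σ1 σ2 w, G.IsPathMeasure σ1 σ2 w (P σ1 σ2 w))
    (hstop : G.StoppingUnderFairness) :
    ∃ N, ∀ s : V × Cnt V, G.yf N s ≤ 1/2 := by
  have h0 : ∀ s : V × Cnt V, ∃ N, ∀ n, N ≤ n → G.yf n s ≤ 1/2 := by
    intro s
    have ht := tendsto_yf_ylim (G := G) s
    rw [ylim_eq_zero P hP hstop s] at ht
    exact Filter.eventually_atTop.1 (ht.eventually_le_const (show (0:ℝ) < 1/2 by norm_num))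
  choose Nf hNf using h0
  exact ⟨Finset.univ.sup Nf, fun s => hNf s _ (Finset.le_sup (Finset.mem_univ s))⟩

end StochGame
namespace StochGame

set_option linter.unusedSectionVars false
set_option maxHeartbeats 1000000

variable {V : Type*} [Fintype V] [DecidableEq V] {G : StochGame V}

lemma AS_window {N : ℕ} {b : ℝ}
    (hb : ∀ (σ1 : Strategy G G.V1) (c₀ : V → ℕ) (u : V), G.AS N σ1 (G.rr c₀) u ≤ b) :
    ∀ (m : ℕ) (σ1 : Strategy G G.V1) (c₀ : V → ℕ) (v : V),
      G.AS (m + N) σ1 (G.rr c₀) v ≤ b * G.AS m σ1 (G.rr c₀) v := by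
  intro m
  induction m with
  | zero =>
    intro σ1 c₀ v
    rw [Nat.zero_add]
    by_cases hT : G.Terminal v
    · rw [AS_terminal N _ _ hT, AS_terminal 0 _ _ hT, mul_zero]
    · have h1 : G.AS 0 σ1 (G.rr c₀) v = 1 := by rw [AS, if_neg hT]
      rw [h1, mul_one]
      exact hb σ1 c₀ v
  | succ m ih =>
    intro σ1 c₀ v
    have hadd : m + 1 + N = (m + N) + 1 := by omega
    rw [hadd, AS]
    conv_rhs => rw [AS]
    by_cases hT : G.Terminal v
    · rw [if_pos hT, if_pos hT, mul_zero]
    rw [if_neg hT, if_neg hT, Finset.mul_sum]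
    refine Finset.sum_le_sum fun v' _ => ?_
    have hc : ∀ k, G.AS k (σ1.shift v) ((G.rr c₀).shift v) v'
        = G.AS k (σ1.shift v) (G.rr (bump v c₀)) v' :=
      fun k => AS_congr k (fun _ _ _ => rfl) (rr_shift_f c₀ v) v'
    rw [hc, hc]
    calc G.step σ1 (G.rr c₀) [] v v' * G.AS (m + N) (σ1.shift v) (G.rr (bump v c₀)) v'
        ≤ G.step σ1 (G.rr c₀) [] v v' * (b * G.AS m (σ1.shift v) (G.rr (bump v c₀)) v') :=
          mul_le_mul_of_nonneg_left (ih (σ1.shift v) (bump v c₀) v')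
            (step_nonneg σ1 (G.rr c₀) [] v v')
      _ = b * (G.step σ1 (G.rr c₀) [] v v' * G.AS m (σ1.shift v) (G.rr (bump v c₀)) v') := by
          ring

lemma AS_pow {N : ℕ} {b : ℝ} (hb0 : 0 ≤ b)
    (hb : ∀ (σ1 : Strategy G G.V1) (c₀ : V → ℕ) (u : V), G.AS N σ1 (G.rr c₀) u ≤ b) :
    ∀ (k : ℕ) (σ1 : Strategy G G.V1) (c₀ : V → ℕ) (v : V),
      G.AS (k * N) σ1 (G.rr c₀) v ≤ b ^ k := by
  intro k
  induction k with
  | zero => intro σ1 c₀ v; simpa using AS_le_one 0 σ1 (G.rr c₀) v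
  | succ k ih =>
    intro σ1 c₀ v
    have : (k + 1) * N = k * N + N := by ring
    rw [this]
    calc G.AS (k * N + N) σ1 (G.rr c₀) v ≤ b * G.AS (k * N) σ1 (G.rr c₀) v :=
          AS_window hb (k * N) σ1 c₀ v
      _ ≤ b * b ^ k := mul_le_mul_of_nonneg_left (ih σ1 c₀ v) hb0
      _ = b ^ (k + 1) := by ring

variable [MeasurableSpace V] [DiscreteMeasurableSpace V]

lemma nonterm_coord_subset (σ1 : Strategy G G.V1) (σ2 : Strategy G G.V2) (i : ℕ) :
    {ω : ℕ → V | ¬ G.Terminal (ω i)} ⊆ G.avoidSet i ∪ G.Bad σ1 σ2 := by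
  intro ω hω
  by_cases hB : ω ∈ G.Bad σ1 σ2
  · exact Or.inr hB
  refine Or.inl (fun j hji hTj => ?_)
  have habs : ∀ d, ω (j + d) = ω j := by
    intro d
    induction d with
    | zero => rfl
    | succ d ih =>
      have hpos := step_pos_of_not_bad hB (j + d)
      have hTd : G.Terminal (ω (j + d)) := by rwa [ih]
      have hstay := step_terminal σ1 σ2 (hist ω (j + d)) hTd hpos
      rw [show j + (d + 1) = (j + d) + 1 by omega, hstay, ih]
  have hij : ω i = ω j := by
    have h := habs (i - j)
    rwa [show j + (i - j) = i by omega] at h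
  exact hω (by rwa [hij])

end StochGame
open StochGame in
/-- In a game with rewards that is stopping under fairness, for any Player 1 strategy the
infimum over fair Player 2 strategies of the expected total reward is finite. -/
theorem iInf_fair_expRew_lt_top
    {V : Type*} [Fintype V] [DecidableEq V] [MeasurableSpace V] [DiscreteMeasurableSpace V]
    (G : StochGame V)
    (P : G.Strategy G.V1 → G.Strategy G.V2 → V → Measure (ℕ → V))
    (hP : ∀ σ1 σ2 w, G.IsPathMeasure σ1 σ2 w (P σ1 σ2 w))
    (r : V → ℝ) (hr0 : ∀ u, 0 ≤ r u) (hrT : ∀ u, G.Terminal u → r u = 0)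
    (hstop : G.StoppingUnderFairness)
    (σ1 : G.Strategy G.V1) (v : V) :
    (⨅ σ2 : {σ2 : G.Strategy G.V2 // G.Fair σ2}, expRew (P σ1 σ2.1 v) r) < ⊤ := by
  classical
  obtain ⟨N₀, hN₀⟩ := exists_uniform_N (G := G) P hP hstop
  set N := N₀ + 1 with hNdef
  haveI : NeZero N := ⟨by omega⟩
  have hyN : ∀ s : V × Cnt V, G.yf N s ≤ 1/2 :=
    fun s => le_trans (yf_antitone (by omega) s) (hN₀ s)
  have hb : ∀ (σ1' : G.Strategy G.V1) (c₀ : V → ℕ) (u : V),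
      G.AS N σ1' (G.rr c₀) u ≤ 1/2 :=
    fun σ1' c₀ u => le_trans (AS_le_yf N σ1' c₀ u) (hyN _)
  have hpow := AS_pow (show (0:ℝ) ≤ 1/2 by norm_num) hb
  set σ2 : G.Strategy G.V2 := G.rr (fun _ => 0) with hσ2def
  have hfair : G.Fair σ2 := rr_fair _
  set μ := P σ1 σ2 v with hμdef
  have hμ := hP σ1 σ2 v
  haveI : IsProbabilityMeasure μ := hμ.1
  -- coordinate bound
  have hcoord : ∀ i : ℕ, μ {ω : ℕ → V | ¬ G.Terminal (ω i)} ≤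
      ENNReal.ofReal ((1/2:ℝ)^(i / N)) := by
    intro i
    calc μ {ω : ℕ → V | ¬ G.Terminal (ω i)} ≤ μ (G.avoidSet i ∪ G.Bad σ1 σ2) :=
          measure_mono (nonterm_coord_subset σ1 σ2 i)
      _ ≤ μ (G.avoidSet i) + μ (G.Bad σ1 σ2) := measure_union_le _ _
      _ = ENNReal.ofReal (G.AS i σ1 σ2 v) := by
          rw [Bad_null hμ, add_zero, measure_avoidSet hμ i]
      _ ≤ ENNReal.ofReal ((1/2:ℝ)^(i / N)) := by
          refine ENNReal.ofReal_le_ofReal ?_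
          refine le_trans (AS_antitone (Nat.div_mul_le_self i N) σ1 σ2 v) ?_
          exact hpow (i / N) σ1 (fun _ => 0) v
  have hg : Measurable (fun x : V => ENNReal.ofReal (r x)) := Measurable.of_discrete
  have h1 : expRew μ r = ∑' i : ℕ, ∫⁻ ω, ENNReal.ofReal (r (ω i)) ∂μ := by
    rw [expRew]
    simp only [rew]
    exact lintegral_tsum fun i => (hg.comp (measurable_pi_apply i)).aemeasurable
  have h2 : ∀ i : ℕ, ∫⁻ ω, ENNReal.ofReal (r (ω i)) ∂μ ≤
      (∑ u : V, ENNReal.ofReal (r u)) * ENNReal.ofReal ((1/2:ℝ)^(i / N)) := by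
    intro i
    rw [← lintegral_map hg (measurable_pi_apply i), lintegral_fintype]
    calc ∑ u : V, ENNReal.ofReal (r u) * (Measure.map (fun ω : ℕ → V => ω i) μ) {u}
        ≤ ∑ u : V, ENNReal.ofReal (r u) * ENNReal.ofReal ((1/2:ℝ)^(i / N)) := by
          refine Finset.sum_le_sum fun u _ => ?_
          by_cases hTu : G.Terminal u
          · rw [hrT u hTu]
            simp
          · refine mul_le_mul_right ?_ _
            rw [Measure.map_apply (measurable_pi_apply i) (measurableSet_singleton u)]
            refine le_trans (measure_mono ?_) (hcoord i)
            intro ω hω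
            have homega : ω i = u := hω
            show ¬ G.Terminal (ω i)
            rwa [homega]
      _ = (∑ u : V, ENNReal.ofReal (r u)) * ENNReal.ofReal ((1/2:ℝ)^(i / N)) := by
          rw [Finset.sum_mul]
  have h3 : expRew μ r ≤ (∑ u : V, ENNReal.ofReal (r u)) *
      ∑' i : ℕ, ENNReal.ofReal ((1/2:ℝ)^(i / N)) := by
    rw [h1, ← ENNReal.tsum_mul_left]
    exact ENNReal.tsum_le_tsum h2
  have h4 : ∑' i : ℕ, ENNReal.ofReal ((1/2:ℝ)^(i / N)) =
      ∑' p : ℕ × Fin N, ENNReal.ofReal ((1/2:ℝ)^p.1) := by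
    rw [← Equiv.tsum_eq (Nat.divModEquiv N) (fun p => ENNReal.ofReal ((1/2:ℝ)^p.1))]
    exact tsum_congr fun i => rfl
  have h5 : ∑' p : ℕ × Fin N, ENNReal.ofReal ((1/2:ℝ)^p.1) =
      (N : ℝ≥0∞) * ∑' k : ℕ, ENNReal.ofReal ((1/2:ℝ)^k) := by
    rw [ENNReal.tsum_prod (f := fun a (_ : Fin N) => ENNReal.ofReal ((1/2:ℝ)^a))]
    have hinner : ∀ k : ℕ, ∑' _j : Fin N, ENNReal.ofReal ((1/2:ℝ)^k) =
        (N : ℝ≥0∞) * ENNReal.ofReal ((1/2:ℝ)^k) := by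
      intro k
      rw [tsum_fintype, Finset.sum_const, Finset.card_univ, Fintype.card_fin, nsmul_eq_mul]
    rw [tsum_congr hinner, ENNReal.tsum_mul_left]
  have h6 : ∑' k : ℕ, ENNReal.ofReal ((1/2:ℝ)^k) < ⊤ := by
    have : ∀ k : ℕ, ENNReal.ofReal ((1/2:ℝ)^k) = (ENNReal.ofReal (1/2))^k := by
      intro k
      rw [← ENNReal.ofReal_pow (by norm_num)]
    rw [tsum_congr this, ENNReal.tsum_geometric]
    refine ENNReal.inv_lt_top.2 ?_
    rw [tsub_pos_iff_lt]
    exact ENNReal.ofReal_lt_one.2 (by norm_num)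
  refine lt_of_le_of_lt (iInf_le _ (⟨σ2, hfair⟩ : {σ2 : G.Strategy G.V2 // G.Fair σ2})) ?_
  refine lt_of_le_of_lt h3 ?_
  rw [h4, h5]
  refine ENNReal.mul_lt_top ?_ (ENNReal.mul_lt_top ?_ h6)
  · exact ENNReal.sum_lt_top.2 fun u _ => ENNReal.ofReal_lt_top
  · exact ENNReal.natCast_lt_top N
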